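/- Under the weaker condition, the 1-dimensional ANOVA space 𝒲 = {f locally integrable : f ∈ L¹_ρ, f' ∈ L²_ψ}, with norm ‖f‖²_𝒲 = |∫ f ρ|² + (1/γ)∫|f'|²ψ, is complete: every Cauchy sequence in 𝒲 converges in 𝒲. -/

import Mathlib

open MeasureTheory Real Set Filter

private lemma amgm (a b c : ℝ) (hc : 0 < c) :
    |a| * |b| ≤ (a ^ 2 * c + b ^ 2 / c) / 2 := by
  have h2 : Real.sqrt c ^ 2 = c := Real.sq_sqrt hc.le
  have h1 : 0 < Real.sqrt c := Real.sqrt_pos.2 hc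
  have key : 2 * (|a| * Real.sqrt c) * (|b| / Real.sqrt c) ≤
      (|a| * Real.sqrt c) ^ 2 + (|b| / Real.sqrt c) ^ 2 := two_mul_le_add_sq _ _
  have e1 : (|a| * Real.sqrt c) ^ 2 = a ^ 2 * c := by rw [mul_pow, sq_abs, h2]
  have e2 : (|b| / Real.sqrt c) ^ 2 = b ^ 2 / c := by rw [div_pow, sq_abs, h2]
  have e3 : 2 * (|a| * Real.sqrt c) * (|b| / Real.sqrt c) = 2 * (|a| * |b|) := by
    field_simp
  rw [e1, e2, e3] at key
  linarith

private lemma norm_sq_L2 (u : Lp ℝ 2 (volume : Measure ℝ)) :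
    ‖u‖ ^ 2 = ∫ x, (u x) ^ 2 := by
  rw [← real_inner_self_eq_norm_sq, L2.inner_def]
  congr 1
  ext x
  simp [RCLike.inner_apply, sq]

private lemma tail_int_pos (ρ W : ℝ → ℝ) (hρint : Integrable ρ) (hρnn : ∀ x, 0 ≤ ρ x)
    (hWm : AEStronglyMeasurable W (volume : Measure ℝ)) (hWnn : ∀ t, 0 ≤ W t)
    (hbd : IntegrableOn (fun t => W t * ∫ y in Ici t, ρ y) (Ioi (0:ℝ))) :
    Integrable (fun y => ρ y * ∫ t in Ioc (0:ℝ) y, W t) := by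
  set S : Set (ℝ × ℝ) := {p : ℝ × ℝ | 0 < p.2 ∧ p.2 ≤ p.1} with hS
  have hSm : MeasurableSet S := by
    apply MeasurableSet.inter
    · exact measurable_snd measurableSet_Ioi
    · exact measurableSet_le measurable_snd measurable_fst
  set k : ℝ × ℝ → ℝ := S.indicator (fun p => ρ p.1 * W p.2) with hk
  have hkm : AEStronglyMeasurable k (volume.prod volume) := by
    apply AEStronglyMeasurable.indicator _ hSm
    exact (hρint.aestronglyMeasurable.comp_fst).mul hWm.comp_snd
  have hknn : ∀ p, 0 ≤ k p := by
    intro p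
    apply Set.indicator_nonneg
    intro p _
    exact mul_nonneg (hρnn _) (hWnn _)
  have hcol : ∀ t : ℝ, (fun y => k (y, t)) =
      if 0 < t then (Ici t).indicator (fun y => ρ y * W t) else 0 := by
    intro t
    funext y
    by_cases ht : 0 < t <;> by_cases hty : t ≤ y <;>
      simp [hk, hS, Set.indicator_apply, ht, hty]
  have hkint : Integrable k (volume.prod volume) := by
    rw [integrable_prod_iff' hkm]
    constructor
    · filter_upwards with t
      rw [hcol t]
      by_cases ht : 0 < t
      · simp only [ht, if_true]
        exact (hρint.mul_const (W t)).indicator measurableSet_Ici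
      · simp only [ht, if_false]
        exact integrable_zero _ _ _
    · have hcomp : (fun t => ∫ y, ‖k (y, t)‖) =
          (Ioi (0:ℝ)).indicator (fun t => W t * ∫ y in Ici t, ρ y) := by
        funext t
        have hnn : ∀ y, ‖k (y, t)‖ = k (y, t) := fun y => by
          rw [Real.norm_eq_abs, abs_of_nonneg (hknn _)]
        simp only [hnn]
        rw [Set.indicator_apply]
        by_cases ht : t ∈ Ioi (0:ℝ)
        · simp only [ht, if_true]
          have : (fun y => k (y, t)) = (Ici t).indicator (fun y => ρ y * W t) := by
            rw [hcol t]; simp [mem_Ioi.1 ht]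
          rw [this, integral_indicator measurableSet_Ici, integral_mul_const, mul_comm]
        · simp only [ht, if_false]
          have : (fun y => k (y, t)) = 0 := by
            have ht' : ¬ (0:ℝ) < t := by simpa using ht
            rw [hcol t]; simp [ht']
          rw [this]
          simp
      rw [hcomp]
      exact hbd.integrable_indicator measurableSet_Ioi
  have := hkint.integral_prod_left
  have hrow : (fun y => ∫ t, k (y, t)) = (fun y => ρ y * ∫ t in Ioc (0:ℝ) y, W t) := by
    funext y
    have : (fun t => k (y, t)) = (Ioc (0:ℝ) y).indicator (fun t => ρ y * W t) := by
      funext t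
      simp [hk, hS, Set.indicator_apply, mem_Ioc, and_comm]
    rw [this, integral_indicator measurableSet_Ioc, integral_const_mul]
  rwa [hrow] at this

private lemma tail_int_neg (ρ W : ℝ → ℝ) (hρint : Integrable ρ) (hρnn : ∀ x, 0 ≤ ρ x)
    (hWm : AEStronglyMeasurable W (volume : Measure ℝ)) (hWnn : ∀ t, 0 ≤ W t)
    (hbd : IntegrableOn (fun t => W t * ∫ y in Iio t, ρ y) (Iic (0:ℝ))) :
    Integrable (fun y => ρ y * ∫ t in Ioc y (0:ℝ), W t) := by
  set S : Set (ℝ × ℝ) := {p : ℝ × ℝ | p.1 < p.2 ∧ p.2 ≤ 0} with hS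
  have hSm : MeasurableSet S := by
    apply MeasurableSet.inter
    · exact measurableSet_lt measurable_fst measurable_snd
    · exact measurable_snd measurableSet_Iic
  set k : ℝ × ℝ → ℝ := S.indicator (fun p => ρ p.1 * W p.2) with hk
  have hkm : AEStronglyMeasurable k (volume.prod volume) := by
    apply AEStronglyMeasurable.indicator _ hSm
    exact (hρint.aestronglyMeasurable.comp_fst).mul hWm.comp_snd
  have hknn : ∀ p, 0 ≤ k p := by
    intro p
    apply Set.indicator_nonneg
    intro p _
    exact mul_nonneg (hρnn _) (hWnn _)
  have hcol : ∀ t : ℝ, (fun y => k (y, t)) =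
      if t ≤ 0 then (Iio t).indicator (fun y => ρ y * W t) else 0 := by
    intro t
    funext y
    by_cases ht : t ≤ 0 <;> by_cases hty : y < t <;>
      simp [hk, hS, Set.indicator_apply, ht, hty]
  have hkint : Integrable k (volume.prod volume) := by
    rw [integrable_prod_iff' hkm]
    constructor
    · filter_upwards with t
      rw [hcol t]
      by_cases ht : t ≤ 0
      · simp only [ht, if_true]
        exact (hρint.mul_const (W t)).indicator measurableSet_Iio
      · simp only [ht, if_false]
        exact integrable_zero _ _ _
    · have hcomp : (fun t => ∫ y, ‖k (y, t)‖) =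
          (Iic (0:ℝ)).indicator (fun t => W t * ∫ y in Iio t, ρ y) := by
        funext t
        have hnn : ∀ y, ‖k (y, t)‖ = k (y, t) := fun y => by
          rw [Real.norm_eq_abs, abs_of_nonneg (hknn _)]
        simp only [hnn]
        rw [Set.indicator_apply]
        by_cases ht : t ∈ Iic (0:ℝ)
        · simp only [ht, if_true]
          have : (fun y => k (y, t)) = (Iio t).indicator (fun y => ρ y * W t) := by
            rw [hcol t]; simp [mem_Iic.1 ht]
          rw [this, integral_indicator measurableSet_Iio, integral_mul_const, mul_comm]
        · simp only [ht, if_false]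
          have : (fun y => k (y, t)) = 0 := by
            have ht' : ¬ t ≤ (0:ℝ) := by simpa using ht
            rw [hcol t]; simp [ht']
          rw [this]
          simp
      rw [hcomp]
      exact hbd.integrable_indicator measurableSet_Iic
  have := hkint.integral_prod_left
  have hrow : (fun y => ∫ t, k (y, t)) = (fun y => ρ y * ∫ t in Ioc y (0:ℝ), W t) := by
    funext y
    have : (fun t => k (y, t)) = (Ioc y (0:ℝ)).indicator (fun t => ρ y * W t) := by
      funext t
      simp [hk, hS, Set.indicator_apply, mem_Ioc]
    rw [this, integral_indicator measurableSet_Ioc, integral_const_mul]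
  rwa [hrow] at this

/-- Membership of the pair (f, g) — a function together with its weak derivative —
in the one-dimensional unanchored ANOVA space 𝒲. -/
def memW (ρ ψ : ℝ → ℝ) (f g : ℝ → ℝ) : Prop :=
  LocallyIntegrable f ∧
  LocallyIntegrable g ∧
  (∀ a b : ℝ, f b - f a = ∫ t in a..b, g t) ∧
  Integrable (fun x => |f x| * ρ x) ∧
  Integrable (fun x => g x ^ 2 * ψ x)

/-- The 𝒲-norm of a function f with weak derivative g. -/
noncomputable def Wnorm (ρ ψ : ℝ → ℝ) (γ : ℝ) (f g : ℝ → ℝ) : ℝ :=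
  Real.sqrt ((∫ x, f x * ρ x) ^ 2 + (1 / γ) * ∫ x, g x ^ 2 * ψ x)

theorem stmt18 (ρ ψ Φ : ℝ → ℝ) (γ : ℝ) (hγ : 0 < γ)
    (hρpos : ∀ x, 0 < ρ x) (hρint : Integrable ρ) (hρ1 : ∫ x, ρ x = 1)
    (hψpos : ∀ x, 0 < ψ x)
    (hψloc : LocallyIntegrable ψ)
    (hψinvloc : LocallyIntegrable (fun x => 1 / ψ x))
    (hΦ : ∀ x, Φ x = ∫ t in Iic x, ρ t)
    (hweak : ∀ c : ℝ, IntegrableOn (fun t => Φ t ^ 2 / ψ t) (Iic c) ∧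
        IntegrableOn (fun t => (1 - Φ t) ^ 2 / ψ t) (Ici c))
    (f g : ℕ → ℝ → ℝ)
    (hmem : ∀ n, memW ρ ψ (f n) (g n))
    (hCauchy : ∀ ε : ℝ, 0 < ε → ∃ N : ℕ, ∀ m ≥ N, ∀ k ≥ N,
        Wnorm ρ ψ γ (f m - f k) (g m - g k) < ε) :
    ∃ F G : ℝ → ℝ, memW ρ ψ F G ∧
      Tendsto (fun n => Wnorm ρ ψ γ (f n - F) (g n - G)) atTop (nhds 0) := by
  classical
  have hρm : AEStronglyMeasurable ρ (volume : Measure ℝ) := hρint.aestronglyMeasurable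
  have hψm : AEStronglyMeasurable ψ (volume : Measure ℝ) := hψloc.aestronglyMeasurable
  have hsq : AEStronglyMeasurable (fun x => Real.sqrt (ψ x)) (volume : Measure ℝ) :=
    Real.continuous_sqrt.comp_aestronglyMeasurable hψm
  have hgm : ∀ n, AEStronglyMeasurable (g n) (volume : Measure ℝ) :=
    fun n => (hmem n).2.1.aestronglyMeasurable
  have hfm : ∀ n, AEStronglyMeasurable (f n) (volume : Measure ℝ) :=
    fun n => (hmem n).1.aestronglyMeasurable
  have hfρ : ∀ n, Integrable (fun x => f n x * ρ x) := by
    intro n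
    refine ((hmem n).2.2.2.1).mono' ((hfm n).mul hρm) ?_
    filter_upwards with x
    rw [Real.norm_eq_abs, abs_mul, abs_of_pos (hρpos x)]
  set a : ℕ → ℝ := fun n => ∫ x, f n x * ρ x with ha
  set h : ℕ → ℝ → ℝ := fun n x => g n x * Real.sqrt (ψ x) with hh
  have hsqψ : ∀ x, Real.sqrt (ψ x) ^ 2 = ψ x := fun x => Real.sq_sqrt (hψpos x).le
  have hhm : ∀ n, AEStronglyMeasurable (h n) (volume : Measure ℝ) := fun n => (hgm n).mul hsq
  have hhL2 : ∀ n, MemLp (h n) 2 (volume : Measure ℝ) := by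
    intro n
    rw [memLp_two_iff_integrable_sq (hhm n)]
    have : (fun x => (h n x) ^ 2) = fun x => g n x ^ 2 * ψ x := by
      funext x; rw [hh]; simp only; rw [mul_pow, hsqψ]
    rw [this]
    exact (hmem n).2.2.2.2
  have hgdiff : ∀ m k : ℕ, Integrable (fun x => (g m x - g k x) ^ 2 * ψ x) := by
    intro m k
    have hbd : Integrable (fun x => 2 * (g m x ^ 2 * ψ x) + 2 * (g k x ^ 2 * ψ x)) :=
      (((hmem m).2.2.2.2).const_mul 2).add (((hmem k).2.2.2.2).const_mul 2)
    refine hbd.mono' ((((hgm m).sub (hgm k)).pow 2).mul hψm) ?_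
    filter_upwards with x
    have hψx := (hψpos x).le
    rw [Real.norm_eq_abs, abs_of_nonneg (mul_nonneg (sq_nonneg _) hψx)]
    nlinarith [sq_nonneg (g m x + g k x), hψx, sq_nonneg (g m x - g k x)]
  have key : ∀ ε : ℝ, 0 < ε → ∃ N : ℕ, ∀ m ≥ N, ∀ k ≥ N,
      |a m - a k| < ε ∧ ∫ x, (g m x - g k x) ^ 2 * ψ x < γ * ε ^ 2 := by
    intro ε hε
    obtain ⟨N, hN⟩ := hCauchy ε hε
    refine ⟨N, fun m hm k hk => ?_⟩
    have hW := hN m hm k hk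
    simp only [Wnorm, Pi.sub_apply] at hW
    set S := ∫ x, (f m x - f k x) * ρ x with hS
    set T := ∫ x, (g m x - g k x) ^ 2 * ψ x with hT
    have hTnn : 0 ≤ T :=
      integral_nonneg fun x => mul_nonneg (sq_nonneg _) (hψpos x).le
    have hlt : S ^ 2 + (1 / γ) * T < ε ^ 2 := (Real.sqrt_lt' hε).1 hW
    have hγ' : 0 < 1 / γ := one_div_pos.2 hγ
    constructor
    · have hSa : S = a m - a k := by
        rw [hS, ha]
        rw [← integral_sub (hfρ m) (hfρ k)]
        congr 1; funext x; ring
      rw [← hSa]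
      have h2 : S ^ 2 < ε ^ 2 := by nlinarith [mul_nonneg hγ'.le hTnn]
      calc |S| = Real.sqrt (S ^ 2) := (Real.sqrt_sq_eq_abs S).symm
        _ < Real.sqrt (ε ^ 2) := Real.sqrt_lt_sqrt (sq_nonneg S) h2
        _ = ε := by rw [Real.sqrt_sq hε.le]
    · have h3 : (1 / γ) * T < ε ^ 2 := by nlinarith [sq_nonneg S]
      have h4 : T = γ * ((1 / γ) * T) := by field_simp
      rw [h4]
      exact mul_lt_mul_of_pos_left h3 hγ
  -- limit of the means
  have haC : CauchySeq a := by
    rw [Metric.cauchySeq_iff]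
    intro ε hε
    obtain ⟨N, hN⟩ := key ε hε
    exact ⟨N, fun m hm k hk => by rw [Real.dist_eq]; exact (hN m hm k hk).1⟩
  obtain ⟨l, hl⟩ := cauchySeq_tendsto_of_complete haC
  -- limit in L2
  set e : ℕ → Lp ℝ 2 (volume : Measure ℝ) := fun n => (hhL2 n).toLp (h n) with he
  have hediff : ∀ m k : ℕ, ‖e m - e k‖ ^ 2 = ∫ x, (g m x - g k x) ^ 2 * ψ x := by
    intro m k
    rw [norm_sq_L2]
    apply integral_congr_ae
    have h1 : ⇑(e m - e k) =ᵐ[volume] h m - h k := by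
      filter_upwards [Lp.coeFn_sub (e m) (e k), (hhL2 m).coeFn_toLp,
        (hhL2 k).coeFn_toLp] with x hx1 hx2 hx3
      rw [hx1]
      simp only [Pi.sub_apply]
      rw [hx2, hx3]
    filter_upwards [h1] with x hx
    rw [hx]
    simp only [Pi.sub_apply, hh]
    rw [← sub_mul, mul_pow, hsqψ]
  have heC : CauchySeq e := by
    rw [Metric.cauchySeq_iff]
    intro ε hε
    have hsγ : 0 < Real.sqrt γ := Real.sqrt_pos.2 hγ
    obtain ⟨N, hN⟩ := key (ε / Real.sqrt γ) (div_pos hε hsγ)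
    refine ⟨N, fun m hm k hk => ?_⟩
    rw [dist_eq_norm]
    have h2 := (hN m hm k hk).2
    have h3 : ‖e m - e k‖ ^ 2 < ε ^ 2 := by
      rw [hediff]
      calc ∫ x, (g m x - g k x) ^ 2 * ψ x < γ * (ε / Real.sqrt γ) ^ 2 := h2
        _ = ε ^ 2 := by
          rw [div_pow, Real.sq_sqrt hγ.le]
          field_simp
    exact lt_of_pow_lt_pow_left₀ 2 hε.le h3
  obtain ⟨E, hE⟩ := cauchySeq_tendsto_of_complete heC
  set H : ℝ → ℝ := ⇑E with hH
  set G : ℝ → ℝ := fun x => H x / Real.sqrt (ψ x) with hG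
  have hGH : ∀ x, G x * Real.sqrt (ψ x) = H x := fun x =>
    div_mul_cancel₀ _ (ne_of_gt (Real.sqrt_pos.2 (hψpos x)))
  have hHm : AEStronglyMeasurable H (volume : Measure ℝ) := Lp.aestronglyMeasurable E
  have hGm : AEStronglyMeasurable G (volume : Measure ℝ) :=
    (hHm.aemeasurable.div hsq.aemeasurable).aestronglyMeasurable
  have halg : ∀ (n : ℕ) (x : ℝ), (g n x - G x) ^ 2 * ψ x = (h n x - H x) ^ 2 := by
    intro n x
    rw [← hGH x, hh]
    simp only
    rw [← sub_mul, mul_pow, hsqψ]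
  have hun : ∀ n, ⇑(e n - E) =ᵐ[volume] fun x => h n x - H x := by
    intro n
    filter_upwards [Lp.coeFn_sub (e n) E, (hhL2 n).coeFn_toLp] with x hx1 hx2
    rw [hx1]
    simp only [Pi.sub_apply]
    rw [hx2]
  have hTn_int : ∀ n, Integrable (fun x => (g n x - G x) ^ 2 * ψ x) := by
    intro n
    have h1 : Integrable (fun x => ((e n - E : Lp ℝ 2 volume) : ℝ → ℝ) x ^ 2) :=
      (memLp_two_iff_integrable_sq (Lp.aestronglyMeasurable _)).1 (Lp.memLp _)
    refine h1.congr ?_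
    filter_upwards [hun n] with x hx
    rw [hx]
    exact (halg n x).symm
  have hTn : ∀ n, ∫ x, (g n x - G x) ^ 2 * ψ x = ‖e n - E‖ ^ 2 := by
    intro n
    rw [norm_sq_L2]
    apply integral_congr_ae
    filter_upwards [hun n] with x hx
    rw [hx]
    exact halg n x
  have hG2ψ : Integrable (fun x => G x ^ 2 * ψ x) := by
    have h1 : Integrable (fun x => H x ^ 2) :=
      (memLp_two_iff_integrable_sq hHm).1 (Lp.memLp E)
    refine h1.congr (Eventually.of_forall fun x => ?_)
    show H x ^ 2 = G x ^ 2 * ψ x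
    rw [← hGH x, mul_pow, hsqψ]
  have hGloc : LocallyIntegrable G := by
    rw [MeasureTheory.locallyIntegrable_iff]
    intro K hK
    have hbd : IntegrableOn (fun x => (G x ^ 2 * ψ x + 1 / ψ x) / 2) K :=
      ((hG2ψ.integrableOn).add (hψinvloc.integrableOn_isCompact hK)).div_const 2
    refine hbd.mono' hGm.restrict ?_
    filter_upwards with x
    have h1 := amgm (G x) 1 (ψ x) (hψpos x)
    rw [Real.norm_eq_abs]
    simpa using h1
  have hGii : ∀ p q : ℝ, IntervalIntegrable G volume p q := fun p q =>
    (hGloc.integrableOn_isCompact isCompact_uIcc).intervalIntegrable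
  set P : ℝ → ℝ := fun x => ∫ t in (0:ℝ)..x, G t with hP
  have hPcont : Continuous P := intervalIntegral.continuous_primitive hGii 0
  have hGabsii : ∀ p q : ℝ, IntervalIntegrable (fun t => |G t|) volume p q :=
    fun p q => (hGii p q).abs
  set Q : ℝ → ℝ := fun x => ∫ t in (0:ℝ)..x, |G t| with hQ
  have hQcont : Continuous Q := intervalIntegral.continuous_primitive hGabsii 0
  have hPQ : ∀ x, |P x| ≤ |Q x| := by
    intro x
    have h1 := intervalIntegral.norm_integral_le_abs_integral_norm
      (f := G) (a := (0:ℝ)) (b := x) (μ := volume)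
    simpa [Real.norm_eq_abs] using h1
  -- Φ facts
  have hΦnn : ∀ t, 0 ≤ Φ t := by
    intro t
    rw [hΦ t]
    exact setIntegral_nonneg measurableSet_Iic fun x _ => (hρpos x).le
  have hIci : ∀ t, ∫ y in Ici t, ρ y = 1 - Φ t := by
    intro t
    have h1 := integral_add_compl (measurableSet_Iic (a := t)) hρint
    rw [compl_Iic] at h1
    rw [integral_Ici_eq_integral_Ioi, ← hΦ t] at *
    rw [hρ1] at h1
    linarith
  have hIio : ∀ t, ∫ y in Iio t, ρ y = Φ t := by
    intro t
    rw [hΦ t, integral_Iic_eq_integral_Iio]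
  have hΦle1 : ∀ t, Φ t ≤ 1 := by
    intro t
    have h1 := hIci t
    have h2 : 0 ≤ ∫ y in Ici t, ρ y :=
      setIntegral_nonneg measurableSet_Ici fun x _ => (hρpos x).le
    linarith
  have hΦmeas : Measurable Φ := by
    have : Monotone Φ := by
      intro s t hst
      rw [hΦ s, hΦ t]
      exact setIntegral_mono_set hρint.integrableOn
        (Eventually.of_forall fun x => (hρpos x).le)
        (HasSubset.Subset.eventuallyLE (Iic_subset_Iic.2 hst))
    exact this.measurable
  -- ρ * |Q| is integrable
  have hρQpos : Integrable (fun y => ρ y * ∫ t in Ioc (0:ℝ) y, |G t|) := by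
    apply tail_int_pos ρ (fun t => |G t|) hρint (fun x => (hρpos x).le) (continuous_abs.comp_aestronglyMeasurable hGm)
      (fun t => abs_nonneg _)
    have heq : (fun t => |G t| * ∫ y in Ici t, ρ y) = fun t => |G t| * (1 - Φ t) := by
      funext t; rw [hIci t]
    rw [heq]
    have hbd : IntegrableOn (fun t => (G t ^ 2 * ψ t + (1 - Φ t) ^ 2 / ψ t) / 2) (Ioi (0:ℝ)) :=
      ((hG2ψ.integrableOn).add ((hweak 0).2.mono_set Ioi_subset_Ici_self)).div_const 2
    refine hbd.mono' ?_ ?_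
    · exact ((continuous_abs.comp_aestronglyMeasurable hGm).mul
        ((measurable_const.sub hΦmeas).aestronglyMeasurable)).restrict
    · filter_upwards with t
      have h1 := amgm (G t) (1 - Φ t) (ψ t) (hψpos t)
      rw [Real.norm_eq_abs, abs_mul, abs_abs]
      exact h1
  have hρQneg : Integrable (fun y => ρ y * ∫ t in Ioc y (0:ℝ), |G t|) := by
    apply tail_int_neg ρ (fun t => |G t|) hρint (fun x => (hρpos x).le) (continuous_abs.comp_aestronglyMeasurable hGm)
      (fun t => abs_nonneg _)
    have heq : (fun t => |G t| * ∫ y in Iio t, ρ y) = fun t => |G t| * Φ t := by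
      funext t; rw [hIio t]
    rw [heq]
    have hbd : IntegrableOn (fun t => (G t ^ 2 * ψ t + Φ t ^ 2 / ψ t) / 2) (Iic (0:ℝ)) :=
      ((hG2ψ.integrableOn).add (hweak 0).1).div_const 2
    refine hbd.mono' ?_ ?_
    · exact ((continuous_abs.comp_aestronglyMeasurable hGm).mul hΦmeas.aestronglyMeasurable).restrict
    · filter_upwards with t
      have h1 := amgm (G t) (Φ t) (ψ t) (hψpos t)
      rw [Real.norm_eq_abs, abs_mul, abs_abs, abs_of_nonneg (hΦnn t)]
      rw [abs_of_nonneg (hΦnn t)] at h1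
      exact h1
  have hρQ : Integrable (fun y => ρ y * |Q y|) := by
    have hsplit : (fun y => ρ y * |Q y|) =
        (fun y => ρ y * ∫ t in Ioc (0:ℝ) y, |G t|) +
        (fun y => ρ y * ∫ t in Ioc y (0:ℝ), |G t|) := by
      funext y
      simp only [Pi.add_apply]
      rcases le_total y 0 with hy | hy
      · have h1 : Ioc (0:ℝ) y = ∅ := Ioc_eq_empty (by simpa using hy)
        have h2 : Q y = - ∫ t in Ioc y (0:ℝ), |G t| := by
          rw [hQ]
          simp only
          rw [intervalIntegral.integral_symm, intervalIntegral.integral_of_le hy]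
        have h3 : 0 ≤ ∫ t in Ioc y (0:ℝ), |G t| :=
          setIntegral_nonneg measurableSet_Ioc fun t _ => abs_nonneg _
        rw [h1, h2, abs_neg, abs_of_nonneg h3]
        simp
      · have h1 : Ioc y (0:ℝ) = ∅ := Ioc_eq_empty (by simpa using hy)
        have h2 : Q y = ∫ t in Ioc (0:ℝ) y, |G t| := by
          rw [hQ]
          simp only
          rw [intervalIntegral.integral_of_le hy]
        have h3 : 0 ≤ ∫ t in Ioc (0:ℝ) y, |G t| :=
          setIntegral_nonneg measurableSet_Ioc fun t _ => abs_nonneg _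
        rw [h1, h2, abs_of_nonneg h3]
        simp
    rw [hsplit]
    exact hρQpos.add hρQneg
  have hρP : Integrable (fun y => ρ y * P y) := by
    refine hρQ.mono' (hρm.mul hPcont.aestronglyMeasurable) ?_
    filter_upwards with y
    rw [Real.norm_eq_abs, abs_mul, abs_of_pos (hρpos y)]
    exact mul_le_mul_of_nonneg_left (hPQ y) (hρpos y).le
  set C : ℝ := l - ∫ y, ρ y * P y with hC
  set F : ℝ → ℝ := fun x => C + P x with hF
  have hFcont : Continuous F := continuous_const.add hPcont
  have hFρint : Integrable (fun x => F x * ρ x) := by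
    have hbd : Integrable (fun x => |C| * ρ x + ρ x * |Q x|) :=
      (hρint.const_mul |C|).add hρQ
    refine hbd.mono' (hFcont.aestronglyMeasurable.mul hρm) ?_
    filter_upwards with x
    rw [Real.norm_eq_abs, abs_mul, abs_of_pos (hρpos x)]
    have h1 : |F x| ≤ |C| + |Q x| := by
      calc |F x| = |C + P x| := by rw [hF]
        _ ≤ |C| + |P x| := abs_add_le _ _
        _ ≤ |C| + |Q x| := by linarith [hPQ x]
    nlinarith [(hρpos x).le, abs_nonneg (Q x)]
  have hFρval : ∫ x, F x * ρ x = l := by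
    have h1 : (fun x => F x * ρ x) = fun x => C * ρ x + ρ x * P x := by
      funext x
      rw [hF]
      ring
    rw [h1, integral_add (hρint.const_mul C) hρP, integral_const_mul, hρ1, hC]
    ring
  refine ⟨F, G, ⟨hFcont.locallyIntegrable, hGloc, ?_, ?_, hG2ψ⟩, ?_⟩
  · -- FTC
    intro p q
    have h1 : F q - F p = P q - P p := by rw [hF]; ring
    rw [h1, hP]
    exact intervalIntegral.integral_interval_sub_left (hGii 0 q) (hGii 0 p)
  · -- |F| ρ integrable
    have hbd : Integrable (fun x => |C| * ρ x + ρ x * |Q x|) :=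
      (hρint.const_mul |C|).add hρQ
    refine hbd.mono' ((hFcont.abs.aestronglyMeasurable).mul hρm) ?_
    filter_upwards with x
    rw [Real.norm_eq_abs, abs_mul, abs_abs, abs_of_pos (hρpos x)]
    have h1 : |F x| ≤ |C| + |Q x| := by
      calc |F x| = |C + P x| := by rw [hF]
        _ ≤ |C| + |P x| := abs_add_le _ _
        _ ≤ |C| + |Q x| := by linarith [hPQ x]
    nlinarith [(hρpos x).le, abs_nonneg (Q x)]
  · -- convergence
    have hs : ∀ n, ∫ x, (f n x - F x) * ρ x = a n - l := by
      intro n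
      have h1 : ∫ x, (f n x - F x) * ρ x = ∫ x, (f n x * ρ x - F x * ρ x) := by
        congr 1; funext x; ring
      rw [h1, integral_sub (hfρ n) hFρint, hFρval, ha]
    have heq : (fun n => Wnorm ρ ψ γ (f n - F) (g n - G)) =
        fun n => Real.sqrt ((a n - l) ^ 2 + (1 / γ) * ‖e n - E‖ ^ 2) := by
      funext n
      simp only [Wnorm, Pi.sub_apply]
      rw [hs n, hTn n]
    rw [heq]
    have h1 : Tendsto (fun n => a n - l) atTop (nhds 0) := by
      have := hl.sub (tendsto_const_nhds : Tendsto (fun _ : ℕ => l) atTop (nhds l))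
      simpa using this
    have h2 : Tendsto (fun n => ‖e n - E‖) atTop (nhds 0) := by
      have := tendsto_iff_dist_tendsto_zero.1 hE
      simpa [dist_eq_norm] using this
    have h3 : Tendsto (fun n => (a n - l) ^ 2 + (1 / γ) * ‖e n - E‖ ^ 2) atTop (nhds 0) := by
      have ha' := h1.pow 2
      have hb' := (h2.pow 2).const_mul (1 / γ)
      have hz : (0:ℝ) ^ 2 = 0 := by norm_num
      rw [hz] at ha'
      rw [hz, mul_zero] at hb'
      have h6 := ha'.add hb'
      rw [add_zero] at h6
      exact h6
    have h4 := (Real.continuous_sqrt.tendsto 0).comp h3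
    have h5 : Tendsto (fun n => Real.sqrt ((a n - l) ^ 2 + (1 / γ) * ‖e n - E‖ ^ 2))
        atTop (nhds (Real.sqrt 0)) := h4
    rw [Real.sqrt_zero] at h5
    exact h5
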